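/- Let (G_n) be the chain of graphs as above with stability index r, and suppose n ≥ 3r. If (u_1,v_1) and (u_2,v_2) are edges of G_n (with u_i < v_i) forming an induced matching of G_n, then the intervals [u_1, v_1] and [u_2, v_2] are disjoint. -/
import Mathlib


/-- `(k,l)` lies in the triangle `Δ((i,j), n-r)` for some edge `(i,j) ∈ E` of `G_r`,
i.e. `0 ≤ k - i ≤ l - j ≤ n - r` (written additively). -/
def triRel (E : Set (ℕ × ℕ)) (r n k l : ℕ) : Prop :=
  ∃ q ∈ E, q.1 ≤ k ∧ k + q.2 ≤ l + q.1 ∧ l + r ≤ n + q.2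

/-- The graph `G_n` of the invariant chain determined by the edge set `E` of `G_r`:
`(k,l)` with `k < l` is an edge of `G_n` iff `(k,l) ∈ Δ((i,j), n-r)` for some `(i,j) ∈ E`. -/
def chainGraph (E : Set (ℕ × ℕ)) (r n : ℕ) : SimpleGraph ℕ :=
  SimpleGraph.fromRel (triRel E r n)

/-- `E` is a set of edges `(i,j)` of a graph `G_r` on `{1,…,r}` with `i < j`. -/
def goodEdges (E : Set (ℕ × ℕ)) (r : ℕ) : Prop :=
  ∀ q ∈ E, 1 ≤ q.1 ∧ q.1 < q.2 ∧ q.2 ≤ r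

lemma triRel_inst {E : Set (ℕ × ℕ)} {r n x y : ℕ} (h : ¬ triRel E r n x y)
    {q : ℕ × ℕ} (hq : q ∈ E) :
    ¬ (q.1 ≤ x ∧ x + q.2 ≤ y + q.1 ∧ y + r ≤ n + q.2) :=
  fun hc => h ⟨q, hq, hc⟩

/-- For `n ≥ 3r`, if edges `(u₁,v₁)` and `(u₂,v₂)` of `G_n` form an induced matching,
then the intervals `[u₁,v₁]` and `[u₂,v₂]` are disjoint. -/
theorem induced_matching_disjoint_intervals (E : Set (ℕ × ℕ)) (r n : ℕ)
    (hE : goodEdges E r) (hn : 3 * r ≤ n) (u₁ v₁ u₂ v₂ : ℕ)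
    (h1 : (chainGraph E r n).Adj u₁ v₁) (h2 : (chainGraph E r n).Adj u₂ v₂)
    (hv1 : u₁ < v₁) (hv2 : u₂ < v₂)
    (hdisj : ({u₁, v₁} : Finset ℕ) ∩ ({u₂, v₂} : Finset ℕ) = ∅)
    (h12 : ¬ (chainGraph E r n).Adj u₁ u₂) (h13 : ¬ (chainGraph E r n).Adj u₁ v₂)
    (h14 : ¬ (chainGraph E r n).Adj v₁ u₂) (h15 : ¬ (chainGraph E r n).Adj v₁ v₂) :
    Disjoint (Set.Icc u₁ v₁) (Set.Icc u₂ v₂) := by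
  -- distinctness from the matching hypothesis
  have hmem : ∀ a, a ∈ ({u₁, v₁} : Finset ℕ) → a ∈ ({u₂, v₂} : Finset ℕ) → False := by
    intro a ha hb
    have : a ∈ ({u₁, v₁} : Finset ℕ) ∩ ({u₂, v₂} : Finset ℕ) := Finset.mem_inter.mpr ⟨ha, hb⟩
    rw [hdisj] at this
    exact absurd this (Finset.notMem_empty a)
  have ne1 : u₁ ≠ u₂ := fun h => hmem u₁ (by simp) (by simp [h])
  have ne2 : u₁ ≠ v₂ := fun h => hmem u₁ (by simp) (by simp [h])
  have ne3 : v₁ ≠ u₂ := fun h => hmem v₁ (by simp) (by simp [h])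
  have ne4 : v₁ ≠ v₂ := fun h => hmem v₁ (by simp) (by simp [h])
  by_contra hcon
  rw [Set.not_disjoint_iff] at hcon
  obtain ⟨x, ⟨hx1, hx2⟩, hx3, hx4⟩ := hcon
  simp only [chainGraph, SimpleGraph.fromRel_adj] at h1 h2 h12 h13 h14 h15
  -- extract witnesses
  obtain ⟨-, h1'⟩ := h1
  obtain ⟨-, h2'⟩ := h2
  have hw1 : triRel E r n u₁ v₁ := by
    rcases h1' with h | h
    · exact h
    · obtain ⟨q, hq, c1, c2, c3⟩ := h
      have := hE q hq
      omega
  have hw2 : triRel E r n u₂ v₂ := by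
    rcases h2' with h | h
    · exact h
    · obtain ⟨q, hq, c1, c2, c3⟩ := h
      have := hE q hq
      omega
  obtain ⟨q1, hq1, p11, p12, p13⟩ := hw1
  obtain ⟨q2, hq2, p21, p22, p23⟩ := hw2
  have g1 := hE q1 hq1
  have g2 := hE q2 hq2
  -- split the non-adjacencies into non-relatedness in both directions
  have n12a : ¬ triRel E r n u₁ u₂ := fun h => h12 ⟨ne1, Or.inl h⟩
  have n12b : ¬ triRel E r n u₂ u₁ := fun h => h12 ⟨ne1, Or.inr h⟩
  have n13a : ¬ triRel E r n u₁ v₂ := fun h => h13 ⟨ne2, Or.inl h⟩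
  have n13b : ¬ triRel E r n v₂ u₁ := fun h => h13 ⟨ne2, Or.inr h⟩
  have n14a : ¬ triRel E r n v₁ u₂ := fun h => h14 ⟨ne3, Or.inl h⟩
  have n14b : ¬ triRel E r n u₂ v₁ := fun h => h14 ⟨ne3, Or.inr h⟩
  have n15a : ¬ triRel E r n v₁ v₂ := fun h => h15 ⟨ne4, Or.inl h⟩
  have n15b : ¬ triRel E r n v₂ v₁ := fun h => h15 ⟨ne4, Or.inr h⟩
  -- instantiate each at both witnesses
  have A1 := triRel_inst n12a hq1; have A2 := triRel_inst n12a hq2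
  have A3 := triRel_inst n12b hq1; have A4 := triRel_inst n12b hq2
  have B1 := triRel_inst n13a hq1; have B2 := triRel_inst n13a hq2
  have B3 := triRel_inst n13b hq1; have B4 := triRel_inst n13b hq2
  have C1 := triRel_inst n14a hq1; have C2 := triRel_inst n14a hq2
  have C3 := triRel_inst n14b hq1; have C4 := triRel_inst n14b hq2
  have D1 := triRel_inst n15a hq1; have D2 := triRel_inst n15a hq2
  have D3 := triRel_inst n15b hq1; have D4 := triRel_inst n15b hq2
  omega
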